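/- Let V be a finite set with at least 2 elements, w a symmetric nonnegative weight function on V × V satisfying the triangle inequality and w(v,v) = 0, T a spanning tree on V, and d : V → ℕ degree bounds with d(v) ≥ 1 for every v. If f is a feasible and legal integer flow for T and d, then there exists a spanning tree T' on V such that deg_{T'}(v) ≤ d(v) for every v ∈ V and w(T') ≤ w(T) + cost(f). -/

import Mathlib

open scoped Classical

/-- The degree of a vertex `v` in the graph `G`. -/
noncomputable def degreeOf {V : Type*} [Fintype V] (G : SimpleGraph V) (v : V) : ℕ :=
  Set.ncard {u | G.Adj v u}

/-- The weight of the graph `G` with respect to the (symmetric) weight function `w`. -/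
noncomputable def weightOf {V : Type*} [Fintype V] (G : SimpleGraph V) (w : V → V → ℝ) : ℝ :=
  (∑ u : V, ∑ v : V, if G.Adj u v then w u v else 0) / 2

/-- A flow is skew-symmetric: `f u v = - f v u`. -/
def IsSkew {V : Type*} (f : V → V → ℤ) : Prop := ∀ u v, f u v = - f v u

/-- The surplus of `v` under `f`: the incoming positive flow minus the outgoing positive flow. -/
def surplus {V : Type*} [Fintype V] (f : V → V → ℤ) (v : V) : ℤ :=
  (∑ u : V, if 0 < f u v then f u v else 0) - ∑ u : V, if 0 < f v u then f v u else 0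

/-- A flow is feasible for tree `T` and degree bounds `d` if the surplus of every vertex is
at least its deficit `deg_T v - d v`. -/
def FeasibleFlow {V : Type*} [Fintype V] (T : SimpleGraph V) (d : V → ℕ)
    (f : V → V → ℤ) : Prop :=
  ∀ v, (degreeOf T v : ℤ) - (d v : ℤ) ≤ surplus f v

/-- A flow is legal for tree `T` if the surplus of every vertex is at most `deg_T v - 1`. -/
def LegalFlow {V : Type*} [Fintype V] (T : SimpleGraph V) (f : V → V → ℤ) : Prop :=
  ∀ v, surplus f v ≤ (degreeOf T v : ℤ) - 1

/-- The cost of a (skew-symmetric) flow: for each unordered pair, the positive flow between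
them times the weight; summed over ordered pairs, each unordered pair contributes once, via
its positive direction. -/
noncomputable def flowCost {V : Type*} [Fintype V] (f : V → V → ℤ) (w : V → V → ℝ) : ℝ :=
  ∑ u : V, ∑ v : V, if 0 < f u v then (f u v : ℝ) * w u v else 0

namespace StmtAux
open SimpleGraph

set_option linter.unusedSectionVars false

variable {V : Type*} [Fintype V]

lemma sum_pair_indicator {M : Type*} [AddCommMonoid M] (g : V → V → M) (c₁ c₂ : V) :
    (∑ a : V, ∑ b : V, if a = c₁ ∧ b = c₂ then g a b else 0) = g c₁ c₂ := by
  rw [Finset.sum_eq_single c₁]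
  · rw [Finset.sum_eq_single c₂]
    · simp
    · intro b _ hb; simp [hb]
    · simp
  · intro a _ ha; simp [ha]
  · simp

lemma sum_ite_sym2 {M : Type*} [AddCommMonoid M] (g : V → V → M) (c₁ c₂ : V) (hce : c₁ ≠ c₂) :
    (∑ a : V, ∑ b : V, if s(a,b) = s(c₁,c₂) then g a b else 0) = g c₁ c₂ + g c₂ c₁ := by
  have key : ∀ a b : V, (if s(a,b) = s(c₁,c₂) then g a b else 0)
      = (if a = c₁ ∧ b = c₂ then g a b else 0) + (if a = c₂ ∧ b = c₁ then g a b else 0) := by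
    intro a b
    by_cases h1 : a = c₁ ∧ b = c₂
    · have h2 : ¬ (a = c₂ ∧ b = c₁) := fun h => hce (h1.1 ▸ h.1.symm ▸ rfl)
      have hs : s(a,b) = s(c₁,c₂) := by rw [h1.1, h1.2]
      simp [h1, h2, hs, hce]
    · by_cases h2 : a = c₂ ∧ b = c₁
      · have hs : s(a,b) = s(c₁,c₂) := by rw [h2.1, h2.2, Sym2.eq_swap]
        have h3 : ¬(a = c₁ ∧ b = c₂) := h1
        rw [if_pos hs, if_neg h3, if_pos h2]
        simp
      · have hne : s(a,b) ≠ s(c₁,c₂) := by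
          rw [Ne, Sym2.eq_iff]; tauto
        simp [hne, h1, h2]
  simp_rw [key, Finset.sum_add_distrib]
  rw [sum_pair_indicator g c₁ c₂, sum_pair_indicator g c₂ c₁]

lemma deleteEdge_adj (T : SimpleGraph V) (e : Sym2 V) (a b : V) :
    (T \ fromEdgeSet {e}).Adj a b ↔ T.Adj a b ∧ s(a,b) ≠ e := by
  rw [sdiff_adj, fromEdgeSet_adj]
  simp only [Set.mem_singleton_iff]
  constructor
  · rintro ⟨h1, h2⟩; exact ⟨h1, fun hh => h2 ⟨hh, h1.ne⟩⟩
  · rintro ⟨h1, h2⟩; exact ⟨h1, fun hh => h2 hh.1⟩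

/-- the swapped graph is a tree, and `u,x` were not adjacent -/
lemma swap_isTree {T : SimpleGraph V} (hT : T.IsTree) {u v x : V}
    (hvx : T.Adj v x) (hux : u ≠ x) (huv : u ≠ v)
    (hreach : (T \ fromEdgeSet {s(v,x)}).Reachable v u) :
    (((T \ fromEdgeSet {s(v,x)}) ⊔ fromEdgeSet {s(u,x)}).IsTree) ∧ ¬ T.Adj u x := by
  have hvx' : v ≠ x := hvx.ne
  have hbridge : ¬ (T \ fromEdgeSet {s(v,x)}).Reachable v x :=
    isBridge_iff.mp ((isAcyclic_iff_forall_adj_isBridge.mp hT.IsAcyclic) hvx)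
  have hsne : s(u,x) ≠ s(v,x) := by
    rw [Ne, Sym2.eq_iff]; push_neg
    exact ⟨fun h => absurd h huv, fun h => absurd h hux⟩
  have hnadj : ¬ T.Adj u x := by
    intro hadj
    have h2 : (T \ fromEdgeSet {s(v,x)}).Adj u x := by
      rw [deleteEdge_adj]; exact ⟨hadj, hsne⟩
    exact hbridge (hreach.trans h2.reachable)
  set T₂ := (T \ fromEdgeSet {s(v,x)}) ⊔ fromEdgeSet {s(u,x)} with hT₂def
  have hT₂adj : ∀ a b, T₂.Adj a b ↔ ((T.Adj a b ∧ s(a,b) ≠ s(v,x)) ∨ s(a,b) = s(u,x)) := by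
    intro a b
    rw [hT₂def, sup_adj, deleteEdge_adj, fromEdgeSet_adj]
    simp only [Set.mem_singleton_iff]
    constructor
    · rintro (⟨h1, h2⟩ | ⟨h1, _⟩)
      · exact Or.inl ⟨h1, h2⟩
      · exact Or.inr h1
    · rintro (⟨h1, h2⟩ | h1)
      · exact Or.inl ⟨h1, h2⟩
      · refine Or.inr ⟨h1, ?_⟩
        rw [Sym2.eq_iff] at h1
        rcases h1 with ⟨rfl, rfl⟩ | ⟨rfl, rfl⟩
        · exact hux
        · exact fun hh => hux hh.symm
  -- connectivity
  have hle : (T \ fromEdgeSet {s(v,x)}) ≤ T₂ := le_sup_left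
  have hxu2 : T₂.Adj x u := by
    rw [hT₂adj]
    exact Or.inr Sym2.eq_swap
  have hcomp : ∀ (y z : V) (p : T.Walk y z), z = v →
      (T \ fromEdgeSet {s(v,x)}).Reachable y v ∨ (T \ fromEdgeSet {s(v,x)}).Reachable y x := by
    intro y z p
    induction p with
    | nil => intro hz; cases hz; exact Or.inl (Reachable.refl _)
    | @cons a c z' h q ihq =>
      intro hz
      by_cases hs : s(a, c) = s(v, x)
      · rw [Sym2.eq_iff] at hs
        rcases hs with ⟨rfl, rfl⟩ | ⟨rfl, rfl⟩
        · exact Or.inl (Reachable.refl _)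
        · exact Or.inr (Reachable.refl _)
      · have hadj : (T \ fromEdgeSet {s(v,x)}).Adj a c := by
          rw [deleteEdge_adj]; exact ⟨h, hs⟩
        rcases ihq hz with h' | h'
        · exact Or.inl (hadj.reachable.trans h')
        · exact Or.inr (hadj.reachable.trans h')
  have hconn : T₂.Connected := by
    have hne : Nonempty V := hT.isConnected.nonempty
    have hr : ∀ y : V, T₂.Reachable y v := by
      intro y
      obtain ⟨p⟩ := hT.isConnected y v
      rcases hcomp y v p rfl with h' | h'
      · exact h'.mono hle
      · exact ((h'.mono hle).trans hxu2.reachable).trans ((hreach.symm).mono hle)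
    exact Connected.mk fun a b => (hr a).trans (hr b).symm
  -- acyclicity
  have hdel : T₂ \ fromEdgeSet {s(u,x)} = T \ fromEdgeSet {s(v,x)} := by
    ext a b
    rw [deleteEdge_adj, hT₂adj, deleteEdge_adj]
    constructor
    · rintro ⟨⟨h1, h2⟩ | h1, h3⟩
      · exact ⟨h1, h2⟩
      · exact absurd h1 h3
    · rintro ⟨h1, h2⟩
      refine ⟨Or.inl ⟨h1, h2⟩, ?_⟩
      intro h3
      rw [Sym2.eq_iff] at h3
      rcases h3 with ⟨rfl, rfl⟩ | ⟨rfl, rfl⟩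
      · exact hnadj h1
      · exact hnadj h1.symm
  have hacy : T₂.IsAcyclic := by
    intro a c hc
    by_cases hmem : s(u,x) ∈ c.edges
    · have h2 : (T₂ \ fromEdgeSet {s(u,x)}).Reachable u x :=
        (adj_and_reachable_delete_edges_iff_exists_cycle.mpr ⟨a, c, hc, hmem⟩).2
      rw [hdel] at h2
      exact hbridge (hreach.trans h2)
    · have hsub : ∀ e ∈ c.edges, e ∈ T.edgeSet := by
        intro e he
        have h4 := c.edges_subset_edgeSet he
        rw [hT₂def, edgeSet_sup] at h4
        rcases h4 with h' | h'
        · rw [edgeSet_sdiff] at h'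
          exact h'.1
        · rw [edgeSet_fromEdgeSet] at h'
          exact absurd (h'.1 ▸ he) hmem
      exact hT.IsAcyclic (c.transfer T hsub) (hc.transfer hsub)
  exact ⟨⟨hconn, hacy⟩, hnadj⟩

end StmtAux

namespace StmtAux
open SimpleGraph

set_option linter.unusedSectionVars false

variable {V : Type*} [Fintype V]

noncomputable def flowValue (f : V → V → ℤ) : ℕ := ∑ a : V, ∑ b : V, (f a b).toNat

lemma flowCost_nonneg (f : V → V → ℤ) (w : V → V → ℝ) (hnn : ∀ u v, 0 ≤ w u v) :
    0 ≤ flowCost f w := by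
  apply Finset.sum_nonneg; intro a _
  apply Finset.sum_nonneg; intro b _
  by_cases h : 0 < f a b
  · rw [if_pos h]
    exact mul_nonneg (by exact_mod_cast h.le) (hnn a b)
  · rw [if_neg h]

lemma exists_good_neighbor {T : SimpleGraph V} (hT : T.IsTree) {u v : V} (huv : u ≠ v)
    (hdeg2 : 2 ≤ degreeOf T v) :
    ∃ x, T.Adj v x ∧ x ≠ u ∧ (T \ fromEdgeSet {s(v,x)}).Reachable v u := by
  obtain ⟨q, hq, huniq⟩ := hT.existsUnique_path v u
  cases q with
  | nil => exact absurd rfl huv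
  | @cons _ z _ h q' =>
    rw [Walk.cons_isPath_iff] at hq
    have hzadj : T.Adj v z := h
    obtain ⟨x, hvx, hxz⟩ : ∃ x ∈ {b | T.Adj v b}, x ≠ z := by
      by_contra hcon
      push_neg at hcon
      have hsub : {b | T.Adj v b} ⊆ {z} := fun a ha => hcon a ha
      have hle := Set.ncard_le_ncard hsub (Set.finite_singleton z)
      rw [Set.ncard_singleton] at hle
      unfold degreeOf at hdeg2
      omega
    have hvx : T.Adj v x := hvx
    have hxu : x ≠ u := by
      intro hxu
      have hps : (Walk.cons (hxu ▸ hvx) Walk.nil : T.Walk v u).IsPath := by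
        rw [Walk.cons_isPath_iff]
        exact ⟨Walk.IsPath.nil, by simp [Ne.symm huv]⟩
      have heq := huniq _ hps
      have h1 := congrArg (fun p => Walk.getVert p 1) heq
      simp only [Walk.getVert_cons_succ, Walk.getVert_zero] at h1
      exact hxz (hxu.trans h1)
    have hnot : s(v,x) ∉ (Walk.cons h q').edges := by
      rw [Walk.edges_cons]
      intro hmem
      rcases List.mem_cons.mp hmem with h' | h'
      · rw [Sym2.eq_iff] at h'
        rcases h' with ⟨-, h''⟩ | ⟨h'', -⟩
        · exact hxz h''
        · exact T.irrefl (h'' ▸ h)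
      · exact hq.2 (Walk.fst_mem_support_of_mem_edges q' h')
    refine ⟨x, hvx, hxu, ⟨(Walk.cons h q').transfer _ ?_⟩⟩
    intro e he
    rw [edgeSet_sdiff, Set.mem_diff]
    refine ⟨(Walk.cons h q').edges_subset_edgeSet he, ?_⟩
    rw [edgeSet_fromEdgeSet]
    rintro ⟨hmem, -⟩
    rw [Set.mem_singleton_iff] at hmem
    exact hnot (hmem ▸ he)

lemma swap_adj {T : SimpleGraph V} {u v x : V} (hux : u ≠ x) (a b : V) :
    ((T \ fromEdgeSet {s(v,x)}) ⊔ fromEdgeSet {s(u,x)}).Adj a b ↔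
      ((T.Adj a b ∧ s(a,b) ≠ s(v,x)) ∨ s(a,b) = s(u,x)) := by
  rw [sup_adj, deleteEdge_adj, fromEdgeSet_adj]
  simp only [Set.mem_singleton_iff]
  constructor
  · rintro (⟨h1, h2⟩ | ⟨h1, _⟩)
    · exact Or.inl ⟨h1, h2⟩
    · exact Or.inr h1
  · rintro (⟨h1, h2⟩ | h1)
    · exact Or.inl ⟨h1, h2⟩
    · refine Or.inr ⟨h1, ?_⟩
      rw [Sym2.eq_iff] at h1
      rcases h1 with ⟨rfl, rfl⟩ | ⟨rfl, rfl⟩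
      · exact hux
      · exact fun hh => hux hh.symm

end StmtAux

namespace StmtAux
open SimpleGraph

set_option linter.unusedSectionVars false
set_option maxHeartbeats 1000000

variable {V : Type*} [Fintype V]

lemma key (w : V → V → ℝ) (hsym : ∀ u v, w u v = w v u) (hnonneg : ∀ u v, 0 ≤ w u v)
    (htri : ∀ u x v, w u v ≤ w u x + w x v) (d : V → ℕ) (hd : ∀ v, 1 ≤ d v) :
    ∀ (n : ℕ) (T : SimpleGraph V), T.IsTree → ∀ f : V → V → ℤ, IsSkew f → (∀ v, f v v = 0) →
      FeasibleFlow T d f → flowValue f = n →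
      ∃ T' : SimpleGraph V, T'.IsTree ∧ (∀ v, degreeOf T' v ≤ d v) ∧
        weightOf T' w ≤ weightOf T w + flowCost f w := by
  intro n
  induction n using Nat.strong_induction_on with
  | _ n ih =>
  intro T hT f hskew hdiagf hfeas hF
  by_cases hdeg : ∀ y, degreeOf T y ≤ d y
  · exact ⟨T, hT, hdeg, by linarith [flowCost_nonneg f w hnonneg]⟩
  push_neg at hdeg
  obtain ⟨v, hv⟩ := hdeg
  -- surplus at v is positive
  have hs1 : (1:ℤ) ≤ surplus f v := by
    have h1 := hfeas v
    have h2 : (d v : ℤ) < (degreeOf T v : ℤ) := by exact_mod_cast hv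
    linarith
  have hout_nonneg : 0 ≤ ∑ a : V, if 0 < f v a then f v a else 0 :=
    Finset.sum_nonneg (fun a _ => by split <;> omega)
  have hin_pos : 0 < ∑ a : V, if 0 < f a v then f a v else 0 := by
    unfold surplus at hs1; linarith
  obtain ⟨u, -, hu⟩ := Finset.exists_ne_zero_of_sum_ne_zero hin_pos.ne'
  have hfuv : 0 < f u v := by
    by_contra h; rw [if_neg h] at hu; exact hu rfl
  have huv : u ≠ v := by
    intro h; rw [h, hdiagf v] at hfuv; exact absurd hfuv (lt_irrefl 0)
  -- pick the neighbor x
  have hdeg2 : 2 ≤ degreeOf T v := by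
    have := hd v; omega
  obtain ⟨x, hvx, hxu, hreach⟩ := exists_good_neighbor hT huv hdeg2
  have hux : u ≠ x := hxu.symm
  have hvx' : v ≠ x := hvx.ne
  obtain ⟨hTree₂, hnadj⟩ := swap_isTree hT hvx hux huv hreach
  set T₂ := (T \ fromEdgeSet {s(v,x)}) ⊔ fromEdgeSet {s(u,x)} with hT₂def
  have hT₂adj : ∀ a b, T₂.Adj a b ↔ ((T.Adj a b ∧ s(a,b) ≠ s(v,x)) ∨ s(a,b) = s(u,x)) :=
    fun a b => swap_adj hux a b
  -- sym2 comparison helpers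
  have e1 : ∀ b, s(v,b) = s(v,x) ↔ b = x := by
    intro b; rw [Sym2.eq_iff]
    constructor
    · rintro (⟨-, h⟩ | ⟨h, -⟩)
      · exact h
      · exact absurd h hvx'
    · rintro rfl; exact Or.inl ⟨rfl, rfl⟩
  have e2 : ∀ b, ¬ (s(v,b) = s(u,x)) := by
    intro b hh; rw [Sym2.eq_iff] at hh
    rcases hh with ⟨hh1, -⟩ | ⟨hh1, -⟩
    · exact huv hh1.symm
    · exact hvx' hh1
  have e3 : ∀ b, s(u,b) = s(u,x) ↔ b = x := by
    intro b; rw [Sym2.eq_iff]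
    constructor
    · rintro (⟨-, h⟩ | ⟨h, -⟩)
      · exact h
      · exact absurd h hux
    · rintro rfl; exact Or.inl ⟨rfl, rfl⟩
  have e4 : ∀ b, ¬ (s(u,b) = s(v,x)) := by
    intro b hh; rw [Sym2.eq_iff] at hh
    rcases hh with ⟨hh1, -⟩ | ⟨hh1, -⟩
    · exact huv hh1
    · exact hux hh1
  have e5 : ∀ b, s(x,b) = s(v,x) ↔ b = v := by
    intro b; rw [Sym2.eq_iff]
    constructor
    · rintro (⟨h, -⟩ | ⟨-, h⟩)
      · exact absurd h.symm hvx'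
      · exact h
    · rintro rfl; exact Or.inr ⟨rfl, rfl⟩
  have e6 : ∀ b, s(x,b) = s(u,x) ↔ b = u := by
    intro b; rw [Sym2.eq_iff]
    constructor
    · rintro (⟨h, -⟩ | ⟨-, h⟩)
      · exact absurd h.symm hux
      · exact h
    · rintro rfl; exact Or.inr ⟨rfl, rfl⟩
  have e7 : ∀ y b, y ≠ v → y ≠ x → ¬ (s(y,b) = s(v,x)) := by
    intro y b hyv hyx hh; rw [Sym2.eq_iff] at hh
    rcases hh with ⟨hh1, -⟩ | ⟨hh1, -⟩
    · exact hyv hh1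
    · exact hyx hh1
  have e8 : ∀ y b, y ≠ u → y ≠ x → ¬ (s(y,b) = s(u,x)) := by
    intro y b hyu hyx hh; rw [Sym2.eq_iff] at hh
    rcases hh with ⟨hh1, -⟩ | ⟨hh1, -⟩
    · exact hyu hh1
    · exact hyx hh1
  -- degree computations
  have hdeg_v : degreeOf T₂ v + 1 = degreeOf T v := by
    have hNv : {b | T₂.Adj v b} = {b | T.Adj v b} \ {x} := by
      ext b
      simp only [Set.mem_setOf_eq, Set.mem_diff, Set.mem_singleton_iff]
      rw [hT₂adj v b]
      constructor
      · rintro (⟨h1, h2⟩ | h1)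
        · exact ⟨h1, fun hbx => h2 ((e1 b).mpr hbx)⟩
        · exact absurd h1 (e2 b)
      · rintro ⟨h1, h2⟩
        exact Or.inl ⟨h1, fun hh => h2 ((e1 b).mp hh)⟩
    unfold degreeOf
    have hxmem : x ∈ {b | T.Adj v b} := hvx
    rw [hNv, Set.ncard_diff_singleton_of_mem hxmem]
    have hpos : 0 < ({b | T.Adj v b}).ncard :=
      (Set.ncard_pos (Set.toFinite _)).mpr ⟨x, hvx⟩
    omega
  have hdeg_u : degreeOf T₂ u = degreeOf T u + 1 := by
    have hNu : {b | T₂.Adj u b} = insert x {b | T.Adj u b} := by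
      ext b
      simp only [Set.mem_setOf_eq, Set.mem_insert_iff]
      rw [hT₂adj u b]
      constructor
      · rintro (⟨h1, -⟩ | h1)
        · exact Or.inr h1
        · exact Or.inl ((e3 b).mp h1)
      · rintro (rfl | h1)
        · exact Or.inr ((e3 b).mpr rfl)
        · exact Or.inl ⟨h1, e4 b⟩
    unfold degreeOf
    have hxnm : x ∉ {b | T.Adj u b} := hnadj
    rw [hNu, Set.ncard_insert_of_notMem hxnm (Set.toFinite _)]
  have hdeg_x : degreeOf T₂ x = degreeOf T x := by
    have hNx : {b | T₂.Adj x b} = insert u ({b | T.Adj x b} \ {v}) := by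
      ext b
      simp only [Set.mem_setOf_eq, Set.mem_insert_iff, Set.mem_diff, Set.mem_singleton_iff]
      rw [hT₂adj x b]
      constructor
      · rintro (⟨h1, h2⟩ | h1)
        · exact Or.inr ⟨h1, fun hh => h2 ((e5 b).mpr hh)⟩
        · exact Or.inl ((e6 b).mp h1)
      · rintro (rfl | ⟨h1, h2⟩)
        · exact Or.inr ((e6 b).mpr rfl)
        · exact Or.inl ⟨h1, fun hh => h2 ((e5 b).mp hh)⟩
    unfold degreeOf
    have hunm : u ∉ {b | T.Adj x b} \ {v} := fun hh => hnadj (Set.mem_setOf_eq ▸ hh.1).symm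
    have hvmem : v ∈ {b | T.Adj x b} := hvx.symm
    rw [hNx, Set.ncard_insert_of_notMem hunm (Set.toFinite _),
      Set.ncard_diff_singleton_of_mem hvmem]
    have hpos : 0 < ({b | T.Adj x b}).ncard :=
      (Set.ncard_pos (Set.toFinite _)).mpr ⟨v, hvx.symm⟩
    omega
  have hdeg_other : ∀ y, y ≠ u → y ≠ v → y ≠ x → degreeOf T₂ y = degreeOf T y := by
    intro y hyu hyv hyx
    have hNy : {b | T₂.Adj y b} = {b | T.Adj y b} := by
      ext b
      simp only [Set.mem_setOf_eq]
      rw [hT₂adj y b]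
      constructor
      · rintro (⟨h1, -⟩ | h1)
        · exact h1
        · exact absurd h1 (e8 y b hyu hyx)
      · intro h1
        exact Or.inl ⟨h1, e7 y b hyv hyx⟩
    unfold degreeOf
    rw [hNy]
  -- the new flow
  set f₂ : V → V → ℤ :=
    fun a b => f a b + (if a = v ∧ b = u then 1 else 0) - (if a = u ∧ b = v then 1 else 0)
    with hf₂def
  have hfvu : f v u = - f u v := hskew v u
  have hf2uv : f₂ u v = f u v - 1 := by simp [hf₂def, huv]
  have hf2vu : f₂ v u = f v u + 1 := by simp [hf₂def, huv]
  have hf2other : ∀ a b, ¬(a = u ∧ b = v) → ¬(a = v ∧ b = u) → f₂ a b = f a b := by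
    intro a b h1 h2; simp [hf₂def, h1, h2]
  have hskew2 : IsSkew f₂ := by
    intro a b
    have hab := hskew a b
    simp only [hf₂def]
    split_ifs <;> first | omega | tauto
  have hdiag2 : ∀ a, f₂ a a = 0 := by
    intro a
    have h3 : ¬(a = v ∧ a = u) := fun h => huv (h.2.symm.trans h.1)
    have h4 : ¬(a = u ∧ a = v) := fun h => huv (h.1.symm.trans h.2)
    simp [hf₂def, h3, h4, hdiagf a]
  -- surplus computations
  have hsurp_other : ∀ y, y ≠ u → y ≠ v → surplus f₂ y = surplus f y := by
    intro y hyu hyv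
    unfold surplus
    congr 1
    · apply Finset.sum_congr rfl; intro a _
      rw [hf2other a y (fun h => hyv h.2) (fun h => hyu h.2)]
    · apply Finset.sum_congr rfl; intro a _
      rw [hf2other y a (fun h => hyu h.1) (fun h => hyv h.1)]
  have hfvu_neg : f v u ≤ -1 := by rw [hfvu]; omega
  have hsurp_u : surplus f₂ u = surplus f u + 1 := by
    unfold surplus
    have hin : ∀ a : V, (if 0 < f₂ a u then f₂ a u else 0) = (if 0 < f a u then f a u else 0) := by
      intro a
      by_cases ha : a = v
      · subst ha
        rw [hf2vu, if_neg (by omega), if_neg (by omega)]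
      · rw [hf2other a u (fun h => huv h.2) (fun h => ha h.1)]
    have hout : (∑ a : V, if 0 < f₂ u a then f₂ u a else 0)
        = (∑ a : V, if 0 < f u a then f u a else 0) - 1 := by
      have keyo : ∀ a : V, (if 0 < f₂ u a then f₂ u a else 0)
          = (if 0 < f u a then f u a else 0) - (if a = v then 1 else 0) := by
        intro a
        by_cases ha : a = v
        · subst ha
          rw [hf2uv, if_pos hfuv, if_pos rfl]
          by_cases h6 : 0 < f u a - 1
          · rw [if_pos h6]
          · rw [if_neg h6]; omega
        · rw [hf2other u a (fun h => ha h.2) (fun h => huv h.1), if_neg ha]; ring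
      rw [Finset.sum_congr rfl (fun a _ => keyo a), Finset.sum_sub_distrib]
      congr 1
      simp
    rw [Finset.sum_congr rfl (fun a _ => hin a), hout]
    ring
  have hsurp_v : surplus f₂ v = surplus f v - 1 := by
    unfold surplus
    have hin : (∑ a : V, if 0 < f₂ a v then f₂ a v else 0)
        = (∑ a : V, if 0 < f a v then f a v else 0) - 1 := by
      have keyi : ∀ a : V, (if 0 < f₂ a v then f₂ a v else 0)
          = (if 0 < f a v then f a v else 0) - (if a = u then 1 else 0) := by
        intro a
        by_cases ha : a = u
        · subst ha
          rw [hf2uv, if_pos hfuv, if_pos rfl]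
          by_cases h6 : 0 < f a v - 1
          · rw [if_pos h6]
          · rw [if_neg h6]; omega
        · rw [hf2other a v (fun h => ha h.1) (fun h => huv h.2.symm), if_neg ha]; ring
      rw [Finset.sum_congr rfl (fun a _ => keyi a), Finset.sum_sub_distrib]
      congr 1
      simp
    have hout : ∀ a : V, (if 0 < f₂ v a then f₂ v a else 0) = (if 0 < f v a then f v a else 0) := by
      intro a
      by_cases ha : a = u
      · subst ha
        rw [hf2vu, if_neg (by omega), if_neg (by omega)]
      · rw [hf2other v a (fun h => huv h.1.symm) (fun h => ha h.2)]
    rw [Finset.sum_congr rfl (fun a _ => hout a), hin]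
    ring
  -- feasibility for the new tree
  have hfeas2 : FeasibleFlow T₂ d f₂ := by
    intro y
    by_cases hyu : y = u
    · subst hyu
      rw [hsurp_u]
      have hc : (degreeOf T₂ y : ℤ) = (degreeOf T y : ℤ) + 1 := by exact_mod_cast hdeg_u
      rw [hc]
      linarith [hfeas y]
    by_cases hyv : y = v
    · subst hyv
      rw [hsurp_v]
      have hc : (degreeOf T₂ y : ℤ) = (degreeOf T y : ℤ) - 1 := by
        have : (degreeOf T₂ y : ℤ) + 1 = (degreeOf T y : ℤ) := by exact_mod_cast hdeg_v
        linarith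
      rw [hc]
      linarith [hfeas y]
    by_cases hyx : y = x
    · subst hyx
      rw [hsurp_other y hyu hyv]
      have hc : (degreeOf T₂ y : ℤ) = (degreeOf T y : ℤ) := by exact_mod_cast hdeg_x
      rw [hc]
      exact hfeas y
    · rw [hsurp_other y hyu hyv]
      have hc : (degreeOf T₂ y : ℤ) = (degreeOf T y : ℤ) := by
        exact_mod_cast hdeg_other y hyu hyv hyx
      rw [hc]
      exact hfeas y
  -- weight of the new tree
  have hw2 : weightOf T₂ w = weightOf T w - w v x + w u x := by
    have expandT₂ : weightOf T₂ w = (∑ a : V, ∑ b : V, if T₂.Adj a b then w a b else 0) / 2 := by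
      rw [weightOf]
      congr 1
      apply Finset.sum_congr rfl; intro a _
      apply Finset.sum_congr rfl; intro b _
      congr
    have expandT : weightOf T w = (∑ a : V, ∑ b : V, if T.Adj a b then w a b else 0) / 2 := rfl
    rw [expandT₂, expandT]
    have keyw : ∀ a b, (if T₂.Adj a b then w a b else 0)
        = (if T.Adj a b then w a b else 0) - (if s(a,b) = s(v,x) then w a b else 0)
          + (if s(a,b) = s(u,x) then w a b else 0) := by
      intro a b
      by_cases h1 : s(a,b) = s(v,x)
      · have h2 : s(a,b) ≠ s(u,x) := by
          rw [h1]; intro hh; rw [Sym2.eq_iff] at hh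
          rcases hh with ⟨hh1, -⟩ | ⟨hh1, -⟩
          · exact huv hh1.symm
          · exact hvx' hh1
        have hTadj : T.Adj a b := by
          rw [Sym2.eq_iff] at h1
          rcases h1 with ⟨rfl, rfl⟩ | ⟨rfl, rfl⟩
          · exact hvx
          · exact hvx.symm
        have hT2n : ¬ T₂.Adj a b := by
          rw [hT₂adj a b]
          rintro (⟨-, hno⟩ | hno)
          · exact hno h1
          · exact h2 hno
        rw [if_neg hT2n, if_pos hTadj, if_pos h1, if_neg h2]; ring
      · by_cases h2 : s(a,b) = s(u,x)
        · have hT2 : T₂.Adj a b := by rw [hT₂adj a b]; exact Or.inr h2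
          have hTn : ¬ T.Adj a b := by
            intro hh
            rw [Sym2.eq_iff] at h2
            rcases h2 with ⟨rfl, rfl⟩ | ⟨rfl, rfl⟩
            · exact hnadj hh
            · exact hnadj hh.symm
          rw [if_pos hT2, if_neg hTn, if_neg h1, if_pos h2]; ring
        · have hiff : T₂.Adj a b ↔ T.Adj a b := by
            rw [hT₂adj a b]
            constructor
            · rintro (⟨hh, -⟩ | hh)
              · exact hh
              · exact absurd hh h2
            · intro hh; exact Or.inl ⟨hh, h1⟩
          rw [if_neg h1, if_neg h2]
          by_cases hA : T.Adj a b
          · rw [if_pos hA, if_pos (hiff.mpr hA)]; ring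
          · rw [if_neg hA, if_neg (fun hh => hA (hiff.mp hh))]; ring
    have step : (∑ a : V, ∑ b : V, if T₂.Adj a b then w a b else 0)
        = ((∑ a : V, ∑ b : V, if T.Adj a b then w a b else 0)
          - (∑ a : V, ∑ b : V, if s(a,b) = s(v,x) then w a b else 0))
          + (∑ a : V, ∑ b : V, if s(a,b) = s(u,x) then w a b else 0) := by
      rw [← Finset.sum_sub_distrib, ← Finset.sum_add_distrib]
      apply Finset.sum_congr rfl
      intro a _
      rw [← Finset.sum_sub_distrib, ← Finset.sum_add_distrib]
      exact Finset.sum_congr rfl (fun b _ => keyw a b)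
    rw [step, sum_ite_sym2 w v x hvx', sum_ite_sym2 w u x hux, hsym x v, hsym x u]
    ring
  -- cost of the new flow
  have hc2 : flowCost f₂ w = flowCost f w - w u v := by
    have expand : ∀ (g : V → V → ℤ), flowCost g w
        = ∑ a : V, ∑ b : V, if 0 < g a b then (g a b : ℝ) * w a b else 0 := fun _ => rfl
    rw [expand f₂, expand f]
    have keyc : ∀ a b, (if 0 < f₂ a b then (f₂ a b : ℝ) * w a b else 0)
        = (if 0 < f a b then (f a b : ℝ) * w a b else 0) - (if a = u ∧ b = v then w a b else 0) := by
      intro a b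
      by_cases h1 : a = u ∧ b = v
      · rw [show a = u from h1.1, show b = v from h1.2]
        have hL : (if 0 < f₂ u v then (f₂ u v : ℝ) * w u v else 0)
            = ((f u v : ℝ) - 1) * w u v := by
          rw [hf2uv]
          by_cases h6 : 0 < f u v - 1
          · rw [if_pos h6]; push_cast; ring
          · have h7 : f u v = 1 := by omega
            rw [if_neg h6, h7]; norm_num
        rw [hL, if_pos hfuv, if_pos (show u = u ∧ v = v from ⟨rfl, rfl⟩)]
        push_cast
        ring
      · by_cases h2 : a = v ∧ b = u
        · rw [show a = v from h2.1, show b = u from h2.2, hf2vu,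
            if_neg (show ¬ (0:ℤ) < f v u + 1 by omega),
            if_neg (show ¬ (0:ℤ) < f v u by omega),
            if_neg (show ¬ (v = u ∧ u = v) from fun h => huv h.2)]
          ring
        · rw [hf2other a b h1 h2, if_neg h1]; ring
    have step : (∑ a : V, ∑ b : V, if 0 < f₂ a b then (f₂ a b : ℝ) * w a b else 0)
        = (∑ a : V, ∑ b : V, if 0 < f a b then (f a b : ℝ) * w a b else 0)
          - (∑ a : V, ∑ b : V, if a = u ∧ b = v then w a b else 0) := by
      rw [← Finset.sum_sub_distrib]
      apply Finset.sum_congr rfl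
      intro a _
      rw [← Finset.sum_sub_distrib]
      exact Finset.sum_congr rfl (fun b _ => keyc a b)
    rw [step, sum_pair_indicator w u v]
  -- the flow value decreases
  have hval : flowValue f = flowValue f₂ + 1 := by
    have expand : ∀ (g : V → V → ℤ), flowValue g
        = ∑ a : V, ∑ b : V, (g a b).toNat := fun _ => rfl
    rw [expand f, expand f₂]
    have keyv : ∀ a b, (f a b).toNat = (f₂ a b).toNat + (if a = u ∧ b = v then 1 else 0) := by
      intro a b
      by_cases h1 : a = u ∧ b = v
      · rw [show a = u from h1.1, show b = v from h1.2, hf2uv,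
          if_pos (show u = u ∧ v = v from ⟨rfl, rfl⟩)]
        omega
      · by_cases h2 : a = v ∧ b = u
        · rw [show a = v from h2.1, show b = u from h2.2, hf2vu,
            if_neg (show ¬ (v = u ∧ u = v) from fun h => huv h.2)]
          omega
        · rw [hf2other a b h1 h2, if_neg h1]; omega
    have step : (∑ a : V, ∑ b : V, (f a b).toNat)
        = (∑ a : V, ∑ b : V, (f₂ a b).toNat)
          + (∑ a : V, ∑ b : V, if a = u ∧ b = v then (1:ℕ) else 0) := by
      rw [← Finset.sum_add_distrib]
      apply Finset.sum_congr rfl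
      intro a _
      rw [← Finset.sum_add_distrib]
      exact Finset.sum_congr rfl (fun b _ => keyv a b)
    have h7 : (∑ a : V, ∑ b : V, if a = u ∧ b = v then (1:ℕ) else 0) = 1 := by
      simpa using sum_pair_indicator (fun _ _ => (1:ℕ)) u v
    rw [step, h7]
  -- apply induction hypothesis
  obtain ⟨T', hT'tree, hT'deg, hT'w⟩ :=
    ih (flowValue f₂) (by omega) T₂ hTree₂ f₂ hskew2 hdiag2 hfeas2 rfl
  refine ⟨T', hT'tree, hT'deg, ?_⟩
  have htri' := htri u v x
  rw [hw2, hc2] at hT'w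
  linarith

end StmtAux

/-- If `f` is a feasible and legal integer flow for the spanning tree `T` and degree
bounds `d` (with `d v ≥ 1`), then there is a spanning tree `T'` meeting the degree bounds
with `w(T') ≤ w(T) + cost(f)`. -/
theorem stmt2 {V : Type*} [Fintype V] (hV : 2 ≤ Fintype.card V)
    (w : V → V → ℝ)
    (hsym : ∀ u v, w u v = w v u)
    (hnonneg : ∀ u v, 0 ≤ w u v)
    (hdiag : ∀ v, w v v = 0)
    (htri : ∀ u x v, w u v ≤ w u x + w x v)
    (T : SimpleGraph V) (hT : T.IsTree)
    (d : V → ℕ) (hd : ∀ v, 1 ≤ d v)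
    (f : V → V → ℤ) (hskew : IsSkew f) (hdiagf : ∀ v, f v v = 0)
    (hfeas : FeasibleFlow T d f) (hleg : LegalFlow T f) :
    ∃ T' : SimpleGraph V, T'.IsTree ∧ (∀ v, degreeOf T' v ≤ d v) ∧
      weightOf T' w ≤ weightOf T w + flowCost f w := by
  exact StmtAux.key w hsym hnonneg htri d hd (StmtAux.flowValue f) T hT f hskew hdiagf hfeas rfl
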